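/- For all two-colored partitions p and p': (a) F({p ⊗ p'}) = F({p, p'}); (b) V({p ⊗ p'}) = V({p, p'}); (c) Σ(p ⊗ p') = Σ(p) + Σ(p'); and (d) for each Y ∈ {L, K, X}, Y({p ⊗ p'}) ⊆ Y({p, p'}) + gcd(Σ(p), Σ(p'))·ℤ. -/

import Mathlib

noncomputable section
attribute [local instance] Classical.propDecidable

/-- A two-colored partition: two rows of points colored white (`true`) or black (`false`),
together with a set partition (setoid) of all points into blocks. -/
structure TCP where
  upper : ℕ
  lower : ℕ
  upColor : Fin upper → Bool
  loColor : Fin lower → Bool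
  rel : Setoid (Fin upper ⊕ Fin lower)

namespace TCP

/-- The points of a partition. -/
abbrev Point (p : TCP) := Fin p.upper ⊕ Fin p.lower

/-- Native color of a point. -/
def color (p : TCP) : p.Point → Bool
  | .inl j => p.upColor j
  | .inr i => p.loColor i

/-- Normalized color: inverted on the upper row. -/
def ncolor (p : TCP) : p.Point → Bool
  | .inl j => !(p.upColor j)
  | .inr i => p.loColor i

/-- Sign of a point: `+1` for normalized white, `-1` for normalized black. -/
def sgn (p : TCP) (x : p.Point) : ℤ := if p.ncolor x then 1 else -1

/-- Color sum of a finite set of points. -/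
def csum (p : TCP) (S : Finset p.Point) : ℤ := ∑ x ∈ S, p.sgn x

/-- Total color sum Σ(p). -/
def tsum (p : TCP) : ℤ := p.csum Finset.univ

/-- Total number of points. -/
def size (p : TCP) : ℕ := p.upper + p.lower

/-- Position in the counter-clockwise cyclic order: lower points left to right,
then upper points right to left. -/
def pos (p : TCP) : p.Point → ℕ
  | .inr i => i
  | .inl j => p.lower + (p.upper - 1 - j)

/-- Cyclic position of `y` relative to `x`. -/
def relpos (p : TCP) (x y : p.Point) : ℕ := (p.size + p.pos y - p.pos x) % p.size

/-- Half-open cyclic interval `]x,y]`. -/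
def Ioc (p : TCP) (x y : p.Point) : Finset p.Point :=
  Finset.univ.filter (fun z => 0 < p.relpos x z ∧ p.relpos x z ≤ p.relpos x y)

/-- Open cyclic interval `]x,y[`. -/
def Ioo (p : TCP) (x y : p.Point) : Finset p.Point :=
  Finset.univ.filter (fun z => 0 < p.relpos x z ∧ p.relpos x z < p.relpos x y)

/-- The color distance between two points. -/
def cdist (p : TCP) (x y : p.Point) : ℤ :=
  if x = y then p.tsum
  else if p.ncolor x = p.ncolor y then p.csum (p.Ioc x y)
  else p.csum (p.Ioo x y)

/-- The block of a point. -/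
def blockOf (p : TCP) (x : p.Point) : Finset p.Point :=
  Finset.univ.filter (fun y => p.rel.r x y)

/-- A finite set of points is a block of `p`. -/
def IsBlock (p : TCP) (B : Finset p.Point) : Prop := ∃ x, B = p.blockOf x

/-- `(a,b,c,d)` is ordered in the cyclic order of `p`. -/
def Ordered4 (p : TCP) (a b c d : p.Point) : Prop :=
  0 < p.relpos a b ∧ p.relpos a b < p.relpos a c ∧ p.relpos a c < p.relpos a d

/-- Two sets of points cross each other. -/
def Cross (p : TCP) (B₁ B₂ : Finset p.Point) : Prop :=
  ∃ a ∈ B₁, ∃ b ∈ B₁, ∃ a' ∈ B₂, ∃ b' ∈ B₂, p.Ordered4 a a' b b'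

/-! ### The analyzer -/

/-- Set of block sizes. -/
def Fset (S : Set TCP) : Set ℕ :=
  {n | ∃ p ∈ S, ∃ B : Finset p.Point, p.IsBlock B ∧ B.card = n}

/-- Set of block color sums. -/
def Vset (S : Set TCP) : Set ℤ :=
  {v | ∃ p ∈ S, ∃ B : Finset p.Point, p.IsBlock B ∧ p.csum B = v}

/-- Set of total color sums. -/
def Sset (S : Set TCP) : Set ℤ := {s | ∃ p ∈ S, p.tsum = s}

/-- Set of color distances between cyclically subsequent legs of the same block
having the same normalized color. -/
def Lset (S : Set TCP) : Set ℤ :=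
  {d | ∃ p ∈ S, ∃ B : Finset p.Point, p.IsBlock B ∧ ∃ a ∈ B, ∃ b ∈ B, a ≠ b ∧
        p.Ioo a b ∩ B = ∅ ∧ p.ncolor a = p.ncolor b ∧ p.cdist a b = d}

/-- Set of color distances between cyclically subsequent legs of the same block
having different normalized colors. -/
def Kset (S : Set TCP) : Set ℤ :=
  {d | ∃ p ∈ S, ∃ B : Finset p.Point, p.IsBlock B ∧ ∃ a ∈ B, ∃ b ∈ B, a ≠ b ∧
        p.Ioo a b ∩ B = ∅ ∧ p.ncolor a ≠ p.ncolor b ∧ p.cdist a b = d}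

/-- Set of color distances between legs of two crossing blocks. -/
def Xset (S : Set TCP) : Set ℤ :=
  {d | ∃ p ∈ S, ∃ B₁ B₂ : Finset p.Point, p.IsBlock B₁ ∧ p.IsBlock B₂ ∧ B₁ ≠ B₂ ∧
        p.Cross B₁ B₂ ∧ ∃ a ∈ B₁, ∃ b ∈ B₂, p.cdist a b = d}

/-- The parameter domain. -/
abbrev Param := Set ℕ × Set ℤ × Set ℤ × Set ℤ × Set ℤ × Set ℤ

/-- The analyzer `Z = (F, V, Σ, L, K, X)`. -/
def Z (S : Set TCP) : Param := (Fset S, Vset S, Sset S, Lset S, Kset S, Xset S)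

/-! ### Operations on partitions -/

/-- Componentwise relation on a sum type. -/
def sumRel {α β : Type*} (s : α → α → Prop) (t : β → β → Prop) : α ⊕ β → α ⊕ β → Prop
  | .inl a, .inl b => s a b
  | .inr a, .inr b => t a b
  | _, _ => False

/-- Componentwise setoid on a sum type. -/
def sumSetoid {α β : Type*} (s : Setoid α) (t : Setoid β) : Setoid (α ⊕ β) where
  r := sumRel s.r t.r
  iseqv := by
    refine ⟨?_, ?_, ?_⟩
    · rintro (a | a) <;> exact Setoid.refl _
    · rintro (a | a) (b | b) h <;> first | exact Setoid.symm h | exact h.elim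
    · rintro (a | a) (b | b) (c | c) h₁ h₂ <;>
        first | exact Setoid.trans h₁ h₂ | exact h₁.elim | exact h₂.elim

/-- Identification of the points of a tensor product with a sum of points. -/
def ptmap (p q : TCP) :
    (Fin (p.upper + q.upper) ⊕ Fin (p.lower + q.lower)) → (p.Point ⊕ q.Point)
  | .inl j => (finSumFinEquiv.symm j).elim (fun a => .inl (.inl a)) (fun a => .inr (.inl a))
  | .inr i => (finSumFinEquiv.symm i).elim (fun a => .inl (.inr a)) (fun a => .inr (.inr a))

/-- Tensor product: horizontal concatenation. -/
def tensor (p q : TCP) : TCP where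
  upper := p.upper + q.upper
  lower := p.lower + q.lower
  upColor := fun j => (finSumFinEquiv.symm j).elim p.upColor q.upColor
  loColor := fun i => (finSumFinEquiv.symm i).elim p.loColor q.loColor
  rel := Setoid.comap (ptmap p q) (sumSetoid p.rel q.rel)

/-- Embedding of the points of `p` into the points of `p.tensor q`. -/
def tinl (p q : TCP) : p.Point → (p.tensor q).Point
  | .inl j => Sum.inl (Fin.castAdd q.upper j)
  | .inr i => Sum.inr (Fin.castAdd q.lower i)

/-- Embedding of the points of `q` into the points of `p.tensor q`. -/
def tinr (p q : TCP) : q.Point → (p.tensor q).Point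
  | .inl j => Sum.inl (Fin.natAdd p.upper j)
  | .inr i => Sum.inr (Fin.natAdd p.lower i)

/-- Involution: swapping the rows. -/
def invol (p : TCP) : TCP where
  upper := p.lower
  lower := p.upper
  upColor := p.loColor
  loColor := p.upColor
  rel := Setoid.comap Sum.swap p.rel

/-- `(p, q)` is composable: the upper row of `p` matches the lower row of `q`. -/
structure Composable (p q : TCP) : Prop where
  len : p.upper = q.lower
  col : ∀ j : Fin p.upper, p.upColor j = q.loColor (Fin.cast len j)

/-- Generating relation for the composition of `p` and `q`. -/
def compRel (p q : TCP) (h : p.upper = q.lower) :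
    (q.Point ⊕ p.Point) → (q.Point ⊕ p.Point) → Prop := fun x y =>
  (∃ a b, x = .inl a ∧ y = .inl b ∧ q.rel.r a b) ∨
  (∃ a b, x = .inr a ∧ y = .inr b ∧ p.rel.r a b) ∨
  (∃ j : Fin p.upper, x = .inl (.inr (Fin.cast h j)) ∧ y = .inr (.inl j)) ∨
  (∃ j : Fin p.upper, y = .inl (.inr (Fin.cast h j)) ∧ x = .inr (.inl j))

/-- Composition: vertical concatenation, with blocks joined along the middle row. -/
def comp (p q : TCP) (h : Composable p q) : TCP where
  upper := q.upper
  lower := p.lower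
  upColor := q.upColor
  loColor := p.loColor
  rel := Setoid.comap
    (fun x : Fin q.upper ⊕ Fin p.lower => match x with
      | .inl j => Sum.inl (Sum.inl j : q.Point)
      | .inr i => Sum.inr (Sum.inr i : p.Point))
    (Relation.EqvGen.setoid (compRel p q h.len))

/-- The empty partition. -/
def emptyP : TCP := ⟨0, 0, Fin.elim0, Fin.elim0, ⊤⟩

/-- The identity partition of color `c`: one upper and one lower point of color `c`
joined in one block. -/
def idPart (c : Bool) : TCP := ⟨1, 1, fun _ => c, fun _ => c, ⊤⟩

/-- The one-row pair partition with two lower points of colors `c₁`, `c₂` in one block. -/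
def lpair (c₁ c₂ : Bool) : TCP := ⟨0, 2, Fin.elim0, fun i => if i = 0 then c₁ else c₂, ⊤⟩

/-- A category of two-colored partitions. -/
def IsCategory (C : Set TCP) : Prop :=
  emptyP ∈ C ∧ idPart true ∈ C ∧ idPart false ∈ C ∧
  lpair true false ∈ C ∧ lpair false true ∈ C ∧
  (∀ p q, p ∈ C → q ∈ C → p.tensor q ∈ C) ∧
  (∀ p, p ∈ C → p.invol ∈ C) ∧
  (∀ p q (h : Composable p q), p ∈ C → q ∈ C → comp p q h ∈ C)

/-! ### Rotations, verticolor reflection, erasing -/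

/-- Rotate the leftmost upper point down (identity if the upper row is empty). -/
def rotDownL (p : TCP) : TCP :=
  if h : 0 < p.upper then
    { upper := p.upper - 1
      lower := p.lower + 1
      upColor := fun j => p.upColor ⟨j + 1, by have := j.isLt; omega⟩
      loColor := fun i => Fin.cases (!(p.upColor ⟨0, h⟩)) (fun i' => p.loColor i') i
      rel := Setoid.comap
        (fun x : Fin (p.upper - 1) ⊕ Fin (p.lower + 1) => match x with
          | .inl j => (Sum.inl ⟨j + 1, by have := j.isLt; omega⟩ : p.Point)
          | .inr i => Fin.cases (Sum.inl ⟨0, h⟩ : p.Point) (fun i' => (Sum.inr i' : p.Point)) i)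
        p.rel }
  else p

/-- Rotate the rightmost upper point down (identity if the upper row is empty). -/
def rotDownR (p : TCP) : TCP :=
  if h : 0 < p.upper then
    { upper := p.upper - 1
      lower := p.lower + 1
      upColor := fun j => p.upColor ⟨j, by have := j.isLt; omega⟩
      loColor := fun i =>
        Fin.lastCases (!(p.upColor ⟨p.upper - 1, by omega⟩)) (fun i' => p.loColor i') i
      rel := Setoid.comap
        (fun x : Fin (p.upper - 1) ⊕ Fin (p.lower + 1) => match x with
          | .inl j => (Sum.inl ⟨j, by have := j.isLt; omega⟩ : p.Point)
          | .inr i => Fin.lastCases (Sum.inl ⟨p.upper - 1, by omega⟩ : p.Point)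
              (fun i' => (Sum.inr i' : p.Point)) i)
        p.rel }
  else p

/-- Rotate the leftmost lower point up (identity if the lower row is empty). -/
def rotUpL (p : TCP) : TCP :=
  if h : 0 < p.lower then
    { upper := p.upper + 1
      lower := p.lower - 1
      upColor := fun j => Fin.cases (!(p.loColor ⟨0, h⟩)) (fun j' => p.upColor j') j
      loColor := fun i => p.loColor ⟨i + 1, by have := i.isLt; omega⟩
      rel := Setoid.comap
        (fun x : Fin (p.upper + 1) ⊕ Fin (p.lower - 1) => match x with
          | .inl j => Fin.cases (Sum.inr ⟨0, h⟩ : p.Point) (fun j' => (Sum.inl j' : p.Point)) j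
          | .inr i => (Sum.inr ⟨i + 1, by have := i.isLt; omega⟩ : p.Point))
        p.rel }
  else p

/-- Rotate the rightmost lower point up (identity if the lower row is empty). -/
def rotUpR (p : TCP) : TCP :=
  if h : 0 < p.lower then
    { upper := p.upper + 1
      lower := p.lower - 1
      upColor := fun j =>
        Fin.lastCases (!(p.loColor ⟨p.lower - 1, by omega⟩)) (fun j' => p.upColor j') j
      loColor := fun i => p.loColor ⟨i, by have := i.isLt; omega⟩
      rel := Setoid.comap
        (fun x : Fin (p.upper + 1) ⊕ Fin (p.lower - 1) => match x with
          | .inl j => Fin.lastCases (Sum.inr ⟨p.lower - 1, by omega⟩ : p.Point)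
              (fun j' => (Sum.inl j' : p.Point)) j
          | .inr i => (Sum.inr ⟨i, by have := i.isLt; omega⟩ : p.Point))
        p.rel }
  else p

/-- Verticolor reflection: reverse both rows and invert all colors. -/
def vreflect (p : TCP) : TCP where
  upper := p.upper
  lower := p.lower
  upColor := fun j => !(p.upColor j.rev)
  loColor := fun i => !(p.loColor i.rev)
  rel := Setoid.comap (Sum.map Fin.rev Fin.rev) p.rel

/-- `{a, b}` is a turn: two cyclically consecutive points of inverse normalized colors. -/
def IsTurn (p : TCP) (a b : p.Point) : Prop :=
  p.relpos a b = 1 ∧ p.ncolor a ≠ p.ncolor b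

/-- `e` identifies the points of `q` with the points of `p` outside `{a, b}`, preserving
rows, colors and order, and `q` carries the block structure obtained from `p` by erasing
`{a, b}` and merging all blocks meeting `{a, b}`. -/
def IsErasingMap (p : TCP) (a b : p.Point) (q : TCP) (e : q.Point → p.Point) : Prop :=
  Function.Injective e ∧
  Set.range e = {x | x ≠ a ∧ x ≠ b} ∧
  (∀ j : Fin q.upper, ∃ j', e (.inl j) = Sum.inl j') ∧
  (∀ i : Fin q.lower, ∃ i', e (.inr i) = Sum.inr i') ∧
  (∀ j₁ j₂ : Fin q.upper, ∀ j₁' j₂' : Fin p.upper,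
    e (.inl j₁) = Sum.inl j₁' → e (.inl j₂) = Sum.inl j₂' → (j₁ < j₂ ↔ j₁' < j₂')) ∧
  (∀ i₁ i₂ : Fin q.lower, ∀ i₁' i₂' : Fin p.lower,
    e (.inr i₁) = Sum.inr i₁' → e (.inr i₂) = Sum.inr i₂' → (i₁ < i₂ ↔ i₁' < i₂')) ∧
  (∀ x, q.color x = p.color (e x)) ∧
  (∀ x y, q.rel.r x y ↔
    (p.rel.r (e x) (e y) ∨
      ((p.rel.r (e x) a ∨ p.rel.r (e x) b) ∧ (p.rel.r (e y) a ∨ p.rel.r (e y) b))))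

/-- `q` is obtained from `p` by erasing the turn `{a, b}`. -/
def IsErasing (p : TCP) (a b : p.Point) (q : TCP) : Prop :=
  p.IsTurn a b ∧ ∃ e : q.Point → p.Point, IsErasingMap p a b q e

/-! ### Auxiliary development for `stmt6` -/

section Basic
variable (p q : TCP)

lemma lower_le_size : p.lower ≤ p.size := Nat.le_add_left _ _

lemma pos_lt (x : p.Point) : p.pos x < p.size := by
  cases x with
  | inl j => have := j.isLt; simp only [pos, size]; omega
  | inr i => have := i.isLt; simp only [pos, size]; omega

lemma size_pos (x : p.Point) : 0 < p.size :=
  Nat.pos_of_ne_zero fun h => by have := p.pos_lt x; omega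

lemma pos_inl_bounds (j : Fin p.upper) :
    p.lower ≤ p.pos (.inl j) ∧ p.pos (.inl j) < p.size := by
  have := j.isLt; simp only [pos, size]; omega

lemma pos_inr_bounds (i : Fin p.lower) : p.pos (.inr i) < p.lower := i.isLt

lemma mod_helper {n a b : ℕ} (ha : a < n) (hb : b < n) :
    (n + b - a) % n = if a ≤ b then b - a else n + b - a := by
  rcases le_or_gt a b with h | h
  · rw [if_pos h]
    have he : n + b - a = n + (b - a) := by omega
    rw [he, Nat.add_mod_left, Nat.mod_eq_of_lt (by omega)]
  · rw [if_neg (by omega), Nat.mod_eq_of_lt (by omega)]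

lemma relpos_eq (x y : p.Point) :
    p.relpos x y =
      if p.pos x ≤ p.pos y then p.pos y - p.pos x else p.size + p.pos y - p.pos x :=
  mod_helper (p.pos_lt x) (p.pos_lt y)

lemma tensor_size : (p.tensor q).size = p.size + q.size := by
  simp only [size, tensor]; omega

lemma pos_tinl_inl (j : Fin p.upper) :
    (p.tensor q).pos (tinl p q (.inl j)) = p.pos (.inl j) + q.size := by
  have := j.isLt
  simp only [pos, tinl, tensor, size, Fin.coe_castAdd]
  omega

lemma pos_tinl_inr (i : Fin p.lower) :
    (p.tensor q).pos (tinl p q (.inr i)) = p.pos (.inr i) := by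
  simp only [pos, tinl, tensor, Fin.coe_castAdd]

lemma pos_tinr (y : q.Point) :
    (p.tensor q).pos (tinr p q y) = q.pos y + p.lower := by
  cases y with
  | inl j =>
    have := j.isLt
    simp only [pos, tinr, tensor, Fin.coe_natAdd]
    omega
  | inr i =>
    simp only [pos, tinr, tensor, Fin.coe_natAdd]
    omega

lemma ncolor_tinl (x : p.Point) : (p.tensor q).ncolor (tinl p q x) = p.ncolor x := by
  cases x with
  | inl j => simp [ncolor, tinl, tensor]
  | inr i => simp [ncolor, tinl, tensor]

lemma ncolor_tinr (y : q.Point) : (p.tensor q).ncolor (tinr p q y) = q.ncolor y := by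
  cases y with
  | inl j => simp [ncolor, tinr, tensor]
  | inr i => simp [ncolor, tinr, tensor]

lemma sgn_tinl (x : p.Point) : (p.tensor q).sgn (tinl p q x) = p.sgn x := by
  simp [sgn, ncolor_tinl]

lemma sgn_tinr (y : q.Point) : (p.tensor q).sgn (tinr p q y) = q.sgn y := by
  simp [sgn, ncolor_tinr]

lemma ptmap_tinl (x : p.Point) : ptmap p q (tinl p q x) = .inl x := by
  cases x with
  | inl j => simp [ptmap, tinl]
  | inr i => simp [ptmap, tinl]

lemma ptmap_tinr (y : q.Point) : ptmap p q (tinr p q y) = .inr y := by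
  cases y with
  | inl j => simp [ptmap, tinr]
  | inr i => simp [ptmap, tinr]

lemma tensor_point_cases (z : (p.tensor q).Point) :
    (∃ x, z = tinl p q x) ∨ (∃ y, z = tinr p q y) := by
  cases z with
  | inl j =>
    rcases h : finSumFinEquiv.symm j with a | a
    · left; exact ⟨.inl a, by simp [tinl, (Equiv.symm_apply_eq _).mp h]⟩
    · right; exact ⟨.inl a, by simp [tinr, (Equiv.symm_apply_eq _).mp h]⟩
  | inr i =>
    rcases h : finSumFinEquiv.symm i with a | a
    · left; exact ⟨.inr a, by simp [tinl, (Equiv.symm_apply_eq _).mp h]⟩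
    · right; exact ⟨.inr a, by simp [tinr, (Equiv.symm_apply_eq _).mp h]⟩

lemma tinl_injective : Function.Injective (tinl p q) := fun a b h => by
  have h2 := congrArg (ptmap p q) h
  rw [ptmap_tinl, ptmap_tinl] at h2
  exact Sum.inl.inj h2

lemma tinr_injective : Function.Injective (tinr p q) := fun a b h => by
  have h2 := congrArg (ptmap p q) h
  rw [ptmap_tinr, ptmap_tinr] at h2
  exact Sum.inr.inj h2

lemma tinl_ne_tinr (x : p.Point) (y : q.Point) : tinl p q x ≠ tinr p q y := fun h => by
  have h2 := congrArg (ptmap p q) h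
  rw [ptmap_tinl, ptmap_tinr] at h2
  exact Sum.inl_ne_inr h2

lemma rel_tinl (x y : p.Point) :
    (p.tensor q).rel.r (tinl p q x) (tinl p q y) ↔ p.rel.r x y := by
  show sumRel p.rel.r q.rel.r (ptmap p q (tinl p q x)) (ptmap p q (tinl p q y)) ↔ _
  rw [ptmap_tinl, ptmap_tinl]
  exact Iff.rfl

lemma rel_tinr (x y : q.Point) :
    (p.tensor q).rel.r (tinr p q x) (tinr p q y) ↔ q.rel.r x y := by
  show sumRel p.rel.r q.rel.r (ptmap p q (tinr p q x)) (ptmap p q (tinr p q y)) ↔ _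
  rw [ptmap_tinr, ptmap_tinr]
  exact Iff.rfl

lemma rel_tinl_tinr (x : p.Point) (y : q.Point) :
    ¬ (p.tensor q).rel.r (tinl p q x) (tinr p q y) := by
  show ¬ sumRel p.rel.r q.rel.r (ptmap p q (tinl p q x)) (ptmap p q (tinr p q y))
  rw [ptmap_tinl, ptmap_tinr]
  exact fun h => h

lemma rel_tinr_tinl (y : q.Point) (x : p.Point) :
    ¬ (p.tensor q).rel.r (tinr p q y) (tinl p q x) := by
  show ¬ sumRel p.rel.r q.rel.r (ptmap p q (tinr p q y)) (ptmap p q (tinl p q x))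
  rw [ptmap_tinl, ptmap_tinr]
  exact fun h => h

lemma blockOf_tinl (x : p.Point) :
    (p.tensor q).blockOf (tinl p q x) = (p.blockOf x).image (tinl p q) := by
  ext z
  simp only [blockOf, Finset.mem_filter, Finset.mem_univ, true_and, Finset.mem_image]
  rcases tensor_point_cases p q z with ⟨w, rfl⟩ | ⟨v, rfl⟩
  · rw [rel_tinl]
    constructor
    · exact fun h => ⟨w, h, rfl⟩
    · rintro ⟨w', hw', he⟩
      obtain rfl := tinl_injective p q he
      exact hw'
  · constructor
    · exact fun h => absurd h (rel_tinl_tinr p q x v)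
    · rintro ⟨w', hw', he⟩
      exact absurd he (tinl_ne_tinr p q w' v)

lemma blockOf_tinr (y : q.Point) :
    (p.tensor q).blockOf (tinr p q y) = (q.blockOf y).image (tinr p q) := by
  ext z
  simp only [blockOf, Finset.mem_filter, Finset.mem_univ, true_and, Finset.mem_image]
  rcases tensor_point_cases p q z with ⟨w, rfl⟩ | ⟨v, rfl⟩
  · constructor
    · exact fun h => absurd h (rel_tinr_tinl p q y w)
    · rintro ⟨w', hw', he⟩
      exact absurd he.symm (tinl_ne_tinr p q w w')
  · rw [rel_tinr]
    constructor
    · exact fun h => ⟨v, h, rfl⟩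
    · rintro ⟨w', hw', he⟩
      obtain rfl := tinr_injective p q he
      exact hw'

end Basic

/-- Threshold for the left embedding. -/
def tauL (p : TCP) : p.Point → ℕ
  | .inl j => p.size + p.lower - p.pos (.inl j)
  | .inr i => p.lower - p.pos (.inr i)

/-- Threshold for the right embedding. -/
def tauR (q : TCP) (y : q.Point) : ℕ := q.size - q.pos y

section Relpos
variable (p q : TCP)

lemma tauL_pos (x : p.Point) : 0 < tauL p x := by
  cases x with
  | inl j =>
    have h1 := p.pos_inl_bounds j
    simp only [tauL]; omega
  | inr i =>
    have h1 := p.pos_inr_bounds i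
    simp only [tauL]; omega

lemma tauR_pos (y : q.Point) : 0 < tauR q y := by
  have := q.pos_lt y
  simp only [tauR]; omega

lemma relpos_tinl (x y : p.Point) :
    (p.tensor q).relpos (tinl p q x) (tinl p q y)
      = p.relpos x y + (if tauL p x ≤ p.relpos x y then q.size else 0) := by
  have hls := p.lower_le_size
  rw [relpos_eq, relpos_eq, tensor_size]
  cases x with
  | inl j =>
    have hx := p.pos_inl_bounds j
    cases y with
    | inl j' =>
      have hy := p.pos_inl_bounds j'
      rw [pos_tinl_inl, pos_tinl_inl]
      simp only [tauL]
      split_ifs <;> omega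
    | inr i' =>
      have hy := p.pos_inr_bounds i'
      rw [pos_tinl_inl, pos_tinl_inr]
      simp only [tauL]
      split_ifs <;> omega
  | inr i =>
    have hx := p.pos_inr_bounds i
    cases y with
    | inl j' =>
      have hy := p.pos_inl_bounds j'
      rw [pos_tinl_inr, pos_tinl_inl]
      simp only [tauL]
      split_ifs <;> omega
    | inr i' =>
      have hy := p.pos_inr_bounds i'
      rw [pos_tinl_inr, pos_tinl_inr]
      simp only [tauL]
      split_ifs <;> omega

lemma relpos_tinr (x y : q.Point) :
    (p.tensor q).relpos (tinr p q x) (tinr p q y)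
      = q.relpos x y + (if tauR q x ≤ q.relpos x y then p.size else 0) := by
  have hls := p.lower_le_size
  have hx := q.pos_lt x
  have hy := q.pos_lt y
  rw [relpos_eq, relpos_eq, tensor_size, pos_tinr, pos_tinr]
  simp only [tauR]
  split_ifs <;> omega

lemma relpos_tinl_tinr (x : p.Point) (v : q.Point) :
    (p.tensor q).relpos (tinl p q x) (tinr p q v) = tauL p x + q.pos v := by
  have hls := p.lower_le_size
  have hv := q.pos_lt v
  unfold relpos
  rw [tensor_size, pos_tinr]
  cases x with
  | inl j =>
    have hx := p.pos_inl_bounds j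
    rw [pos_tinl_inl,
      mod_helper (by omega) (by omega)]
    simp only [tauL]
    split_ifs <;> omega
  | inr i =>
    have hx := p.pos_inr_bounds i
    rw [pos_tinl_inr,
      mod_helper (by omega) (by omega)]
    simp only [tauL]
    split_ifs <;> omega

lemma relpos_tinr_tinl (y : q.Point) (w : p.Point) :
    ∃ s, s < p.size ∧
      (p.tensor q).relpos (tinr p q y) (tinl p q w) = tauR q y + s := by
  have hls := p.lower_le_size
  have hy := q.pos_lt y
  unfold relpos
  rw [tensor_size, pos_tinr]
  cases w with
  | inl j =>
    have hw := p.pos_inl_bounds j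
    refine ⟨p.pos (.inl j) - p.lower, by omega, ?_⟩
    rw [pos_tinl_inl, mod_helper (by omega) (by omega)]
    simp only [tauR]
    split_ifs <;> omega
  | inr i =>
    have hw := p.pos_inr_bounds i
    refine ⟨p.size + p.pos (.inr i) - p.lower, by omega, ?_⟩
    rw [pos_tinl_inr, mod_helper (by omega) (by omega)]
    simp only [tauR]
    split_ifs <;> omega

end Relpos

section Generic

variable {r T : TCP} {f : r.Point → T.Point} {τ : r.Point → ℕ} {M : ℕ} {O : ℤ}

lemma gen_relpos_pos_iff (hτ : ∀ x, 0 < τ x)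
    (hrel : ∀ x y, T.relpos (f x) (f y)
      = r.relpos x y + (if τ x ≤ r.relpos x y then M else 0))
    (x z : r.Point) : 0 < T.relpos (f x) (f z) ↔ 0 < r.relpos x z := by
  rw [hrel]
  have := hτ x
  split_ifs <;> omega

lemma gen_relpos_lt_iff
    (hrel : ∀ x y, T.relpos (f x) (f y)
      = r.relpos x y + (if τ x ≤ r.relpos x y then M else 0))
    (x z₁ z₂ : r.Point) :
    T.relpos (f x) (f z₁) < T.relpos (f x) (f z₂) ↔ r.relpos x z₁ < r.relpos x z₂ := by
  rw [hrel, hrel]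
  split_ifs <;> omega

lemma gen_relpos_le_iff
    (hrel : ∀ x y, T.relpos (f x) (f y)
      = r.relpos x y + (if τ x ≤ r.relpos x y then M else 0))
    (x z₁ z₂ : r.Point) :
    T.relpos (f x) (f z₁) ≤ T.relpos (f x) (f z₂) ↔ r.relpos x z₁ ≤ r.relpos x z₂ := by
  rw [hrel, hrel]
  split_ifs <;> omega

lemma gen_mem_Ioo (hτ : ∀ x, 0 < τ x)
    (hrel : ∀ x y, T.relpos (f x) (f y)
      = r.relpos x y + (if τ x ≤ r.relpos x y then M else 0))
    (x y w : r.Point) :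
    f w ∈ T.Ioo (f x) (f y) ↔ w ∈ r.Ioo x y := by
  simp only [Ioo, Finset.mem_filter, Finset.mem_univ, true_and]
  rw [gen_relpos_pos_iff hτ hrel, gen_relpos_lt_iff hrel]

lemma gen_ordered4_iff (hτ : ∀ x, 0 < τ x)
    (hrel : ∀ x y, T.relpos (f x) (f y)
      = r.relpos x y + (if τ x ≤ r.relpos x y then M else 0))
    (a a' b b' : r.Point) :
    T.Ordered4 (f a) (f a') (f b) (f b') ↔ r.Ordered4 a a' b b' := by
  unfold Ordered4
  rw [gen_relpos_pos_iff hτ hrel, gen_relpos_lt_iff hrel, gen_relpos_lt_iff hrel]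

lemma gen_no_mixed (hrel : ∀ x y, T.relpos (f x) (f y)
      = r.relpos x y + (if τ x ≤ r.relpos x y then M else 0))
    (hmix : ∀ x z, (∀ w, f w ≠ z) → ∃ s, s < M ∧ T.relpos (f x) z = τ x + s)
    (x y : r.Point) (z z' : T.Point)
    (hz : ∀ w, f w ≠ z) (hz' : ∀ w, f w ≠ z') :
    ¬ T.Ordered4 (f x) z (f y) z' := by
  rintro ⟨h1, h2, h3⟩
  obtain ⟨s1, hs1, e1⟩ := hmix x z hz
  obtain ⟨s2, hs2, e2⟩ := hmix x z' hz'
  rw [e1] at h2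
  rw [e2] at h3
  rw [hrel] at h2 h3
  split_ifs at h2 h3 <;> omega

lemma gen_Ioc (hinj : Function.Injective f) (hτ : ∀ x, 0 < τ x)
    (hrel : ∀ x y, T.relpos (f x) (f y)
      = r.relpos x y + (if τ x ≤ r.relpos x y then M else 0))
    (hmix : ∀ x z, (∀ w, f w ≠ z) → ∃ s, s < M ∧ T.relpos (f x) z = τ x + s)
    (x y : r.Point) :
    T.Ioc (f x) (f y) = (r.Ioc x y).image f ∪
      (if τ x ≤ r.relpos x y then Finset.univ.filter (fun z => ∀ w, f w ≠ z) else ∅) := by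
  ext z
  rw [Finset.mem_union]
  by_cases hz : ∃ w, f w = z
  · obtain ⟨w, rfl⟩ := hz
    simp only [Ioc, Finset.mem_filter, Finset.mem_univ, true_and, Finset.mem_image]
    rw [gen_relpos_pos_iff hτ hrel, gen_relpos_le_iff hrel]
    constructor
    · intro h
      exact Or.inl ⟨w, h, rfl⟩
    · rintro (⟨w', hw', he⟩ | hbad)
      · obtain rfl := hinj he
        exact hw'
      · exfalso
        by_cases hc : τ x ≤ r.relpos x y
        · rw [if_pos hc] at hbad
          exact (Finset.mem_filter.mp hbad).2 w rfl
        · rw [if_neg hc] at hbad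
          exact Finset.notMem_empty _ hbad
  · push_neg at hz
    obtain ⟨s, hs, hrz⟩ := hmix x z hz
    have h1 : z ∉ (r.Ioc x y).image f := by
      simp only [Finset.mem_image, not_exists, not_and]
      exact fun w _ => hz w
    simp only [Ioc, Finset.mem_filter, Finset.mem_univ, true_and]
    rw [hrz, hrel]
    constructor
    · rintro ⟨h0, hle⟩
      right
      have hτx := hτ x
      have hc : τ x ≤ r.relpos x y := by
        by_contra hc
        rw [if_neg hc] at hle
        omega
      rw [if_pos hc]
      exact Finset.mem_filter.mpr ⟨Finset.mem_univ _, hz⟩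
    · rintro (h | h)
      · exact absurd h h1
      · split_ifs at h with hc
        · have hτx := hτ x
          constructor
          · omega
          · rw [if_pos hc]; omega
        · exact absurd h (Finset.notMem_empty _)

lemma gen_Ioo_eq (hinj : Function.Injective f) (hτ : ∀ x, 0 < τ x)
    (hrel : ∀ x y, T.relpos (f x) (f y)
      = r.relpos x y + (if τ x ≤ r.relpos x y then M else 0))
    (hmix : ∀ x z, (∀ w, f w ≠ z) → ∃ s, s < M ∧ T.relpos (f x) z = τ x + s)
    (x y : r.Point) (hxy : τ x ≤ r.relpos x y) :
    T.Ioo (f x) (f y) = (r.Ioo x y).image f ∪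
      (if τ x ≤ r.relpos x y then Finset.univ.filter (fun z => ∀ w, f w ≠ z) else ∅) := by
  ext z
  rw [Finset.mem_union]
  by_cases hz : ∃ w, f w = z
  · obtain ⟨w, rfl⟩ := hz
    simp only [Ioo, Finset.mem_filter, Finset.mem_univ, true_and, Finset.mem_image]
    rw [gen_relpos_pos_iff hτ hrel, gen_relpos_lt_iff hrel]
    constructor
    · intro h
      exact Or.inl ⟨w, h, rfl⟩
    · rintro (⟨w', hw', he⟩ | hbad)
      · obtain rfl := hinj he
        exact hw'
      · exfalso
        by_cases hc : τ x ≤ r.relpos x y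
        · rw [if_pos hc] at hbad
          exact (Finset.mem_filter.mp hbad).2 w rfl
        · rw [if_neg hc] at hbad
          exact Finset.notMem_empty _ hbad
  · push_neg at hz
    obtain ⟨s, hs, hrz⟩ := hmix x z hz
    have h1 : z ∉ (r.Ioo x y).image f := by
      simp only [Finset.mem_image, not_exists, not_and]
      exact fun w _ => hz w
    simp only [Ioo, Finset.mem_filter, Finset.mem_univ, true_and]
    rw [hrz, hrel]
    constructor
    · rintro ⟨h0, hle⟩
      right
      rw [if_pos hxy]
      exact Finset.mem_filter.mpr ⟨Finset.mem_univ _, hz⟩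
    · rintro (h | h)
      · exact absurd h h1
      · have hτx := hτ x
        rw [if_pos hxy]
        constructor
        · omega
        · omega

-- when the threshold is not met, no complement points lie in the open interval either
lemma gen_Ioo_eq' (hinj : Function.Injective f) (hτ : ∀ x, 0 < τ x)
    (hrel : ∀ x y, T.relpos (f x) (f y)
      = r.relpos x y + (if τ x ≤ r.relpos x y then M else 0))
    (hmix : ∀ x z, (∀ w, f w ≠ z) → ∃ s, s < M ∧ T.relpos (f x) z = τ x + s)
    (x y : r.Point) (hxy : ¬ τ x ≤ r.relpos x y) :
    T.Ioo (f x) (f y) = (r.Ioo x y).image f := by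
  ext z
  by_cases hz : ∃ w, f w = z
  · obtain ⟨w, rfl⟩ := hz
    simp only [Ioo, Finset.mem_filter, Finset.mem_univ, true_and, Finset.mem_image]
    rw [gen_relpos_pos_iff hτ hrel, gen_relpos_lt_iff hrel]
    constructor
    · intro h
      exact ⟨w, h, rfl⟩
    · rintro ⟨w', hw', he⟩
      obtain rfl := hinj he
      exact hw'
  · push_neg at hz
    obtain ⟨s, hs, hrz⟩ := hmix x z hz
    have h1 : z ∉ (r.Ioo x y).image f := by
      simp only [Finset.mem_image, not_exists, not_and]
      exact fun w _ => hz w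
    simp only [Ioo, Finset.mem_filter, Finset.mem_univ, true_and]
    rw [hrz, hrel, if_neg hxy]
    constructor
    · rintro ⟨h0, hlt⟩
      exact absurd hlt (by omega)
    · intro h
      exact absurd h h1

lemma csum_union (T : TCP) (A B : Finset T.Point) (h : Disjoint A B) :
    T.csum (A ∪ B) = T.csum A + T.csum B :=
  Finset.sum_union h

lemma gen_csum_image (hinj : Function.Injective f)
    (hsgn : ∀ x, T.sgn (f x) = r.sgn x) (S : Finset r.Point) :
    T.csum (S.image f) = r.csum S := by
  unfold csum
  rw [Finset.sum_image (fun a _ b _ h => hinj h)]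
  exact Finset.sum_congr rfl fun x _ => hsgn x

lemma gen_cdist (hinj : Function.Injective f) (hτ : ∀ x, 0 < τ x)
    (hnc : ∀ x, T.ncolor (f x) = r.ncolor x)
    (hrel : ∀ x y, T.relpos (f x) (f y)
      = r.relpos x y + (if τ x ≤ r.relpos x y then M else 0))
    (hmix : ∀ x z, (∀ w, f w ≠ z) → ∃ s, s < M ∧ T.relpos (f x) z = τ x + s)
    (hcomp : T.csum (Finset.univ.filter (fun z => ∀ w, f w ≠ z)) = O)
    (htsum : T.tsum = r.tsum + O)
    (x y : r.Point) :
    ∃ c : ℤ, (c = 0 ∨ c = 1) ∧ T.cdist (f x) (f y) = r.cdist x y + c * O := by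
  have hsgn : ∀ x, T.sgn (f x) = r.sgn x := fun x => by simp [sgn, hnc]
  have hdisj : ∀ S : Finset r.Point,
      Disjoint (S.image f)
        (if τ x ≤ r.relpos x y then Finset.univ.filter (fun z => ∀ w, f w ≠ z) else ∅) := by
    intro S
    split_ifs
    · rw [Finset.disjoint_left]
      rintro z hz1 hz2
      obtain ⟨w, _, rfl⟩ := Finset.mem_image.mp hz1
      exact (Finset.mem_filter.mp hz2).2 w rfl
    · exact Finset.disjoint_empty_right _
  have hcsum_ite : T.csum (if τ x ≤ r.relpos x y
        then Finset.univ.filter (fun z => ∀ w, f w ≠ z) else ∅)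
      = if τ x ≤ r.relpos x y then O else 0 := by
    split_ifs
    · exact hcomp
    · simp [csum]
  by_cases hxy : x = y
  · subst hxy
    refine ⟨1, Or.inr rfl, ?_⟩
    rw [cdist, cdist, if_pos rfl, if_pos rfl, htsum]
    ring
  · have hf : f x ≠ f y := fun h => hxy (hinj h)
    refine ⟨if τ x ≤ r.relpos x y then 1 else 0, by split_ifs <;> simp, ?_⟩
    rw [cdist, cdist, if_neg hf, if_neg hxy]
    by_cases hcc : r.ncolor x = r.ncolor y
    · rw [if_pos (by rw [hnc, hnc]; exact hcc), if_pos hcc,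
        gen_Ioc hinj hτ hrel hmix x y]
      rw [csum_union T _ _ (hdisj _), gen_csum_image hinj hsgn, hcsum_ite]
      split_ifs <;> ring
    · rw [if_neg (by rw [hnc, hnc]; exact hcc), if_neg hcc]
      by_cases hc : τ x ≤ r.relpos x y
      · rw [gen_Ioo_eq hinj hτ hrel hmix x y hc]
        rw [csum_union T _ _ (hdisj _), gen_csum_image hinj hsgn, hcsum_ite]
        split_ifs <;> ring
      · rw [gen_Ioo_eq' hinj hτ hrel hmix x y hc]
        rw [gen_csum_image hinj hsgn]
        rw [if_neg hc]
        ring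

end Generic

section Instantiate
variable (p q : TCP)

lemma mixL : ∀ (x : p.Point) (z : (p.tensor q).Point), (∀ w, tinl p q w ≠ z) →
    ∃ s, s < q.size ∧ (p.tensor q).relpos (tinl p q x) z = tauL p x + s := by
  intro x z hz
  rcases tensor_point_cases p q z with ⟨w, rfl⟩ | ⟨v, rfl⟩
  · exact absurd rfl (hz w)
  · exact ⟨q.pos v, q.pos_lt v, relpos_tinl_tinr p q x v⟩

lemma mixR : ∀ (y : q.Point) (z : (p.tensor q).Point), (∀ w, tinr p q w ≠ z) →
    ∃ s, s < p.size ∧ (p.tensor q).relpos (tinr p q y) z = tauR q y + s := by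
  intro y z hz
  rcases tensor_point_cases p q z with ⟨w, rfl⟩ | ⟨v, rfl⟩
  · obtain ⟨s, hs, he⟩ := relpos_tinr_tinl p q y w
    exact ⟨s, hs, he⟩
  · exact absurd rfl (hz v)

lemma csum_image_tinl (S : Finset p.Point) :
    (p.tensor q).csum (S.image (tinl p q)) = p.csum S :=
  gen_csum_image (tinl_injective p q) (sgn_tinl p q) S

lemma csum_image_tinr (S : Finset q.Point) :
    (p.tensor q).csum (S.image (tinr p q)) = q.csum S :=
  gen_csum_image (tinr_injective p q) (sgn_tinr p q) S

lemma compl_tinl :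
    (Finset.univ.filter (fun z => ∀ w, tinl p q w ≠ z))
      = (Finset.univ : Finset q.Point).image (tinr p q) := by
  ext z
  simp only [Finset.mem_filter, Finset.mem_univ, true_and, Finset.mem_image]
  constructor
  · intro h
    rcases tensor_point_cases p q z with ⟨w, rfl⟩ | ⟨v, rfl⟩
    · exact absurd rfl (h w)
    · exact ⟨v, rfl⟩
  · rintro ⟨v, _, rfl⟩ w
    exact tinl_ne_tinr p q w v

lemma compl_tinr :
    (Finset.univ.filter (fun z => ∀ w, tinr p q w ≠ z))
      = (Finset.univ : Finset p.Point).image (tinl p q) := by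
  ext z
  simp only [Finset.mem_filter, Finset.mem_univ, true_and, Finset.mem_image]
  constructor
  · intro h
    rcases tensor_point_cases p q z with ⟨w, rfl⟩ | ⟨v, rfl⟩
    · exact ⟨w, rfl⟩
    · exact absurd rfl (h v)
  · rintro ⟨v, _, rfl⟩ w
    exact (tinl_ne_tinr p q v w).symm

lemma tsum_tensor : (p.tensor q).tsum = p.tsum + q.tsum := by
  have hdisj : Disjoint ((Finset.univ : Finset p.Point).image (tinl p q))
      ((Finset.univ : Finset q.Point).image (tinr p q)) := by
    rw [Finset.disjoint_left]
    rintro z hz1 hz2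
    obtain ⟨w, _, rfl⟩ := Finset.mem_image.mp hz1
    obtain ⟨v, _, he⟩ := Finset.mem_image.mp hz2
    exact tinl_ne_tinr p q w v he.symm
  have huniv : (Finset.univ : Finset (p.tensor q).Point)
      = (Finset.univ : Finset p.Point).image (tinl p q)
        ∪ (Finset.univ : Finset q.Point).image (tinr p q) := by
    ext z
    simp only [Finset.mem_univ, true_iff, Finset.mem_union, Finset.mem_image]
    rcases tensor_point_cases p q z with ⟨x, rfl⟩ | ⟨y, rfl⟩
    · exact Or.inl ⟨x, trivial, rfl⟩
    · exact Or.inr ⟨y, trivial, rfl⟩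
  show (p.tensor q).csum _ = p.csum _ + q.csum _
  rw [huniv, csum_union _ _ _ hdisj, csum_image_tinl, csum_image_tinr]

lemma hcompL :
    (p.tensor q).csum (Finset.univ.filter (fun z => ∀ w, tinl p q w ≠ z)) = q.tsum := by
  rw [compl_tinl, csum_image_tinr]
  rfl

lemma hcompR :
    (p.tensor q).csum (Finset.univ.filter (fun z => ∀ w, tinr p q w ≠ z)) = p.tsum := by
  rw [compl_tinr, csum_image_tinl]
  rfl

lemma cdist_tinl (x y : p.Point) :
    ∃ c : ℤ, (c = 0 ∨ c = 1) ∧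
      (p.tensor q).cdist (tinl p q x) (tinl p q y) = p.cdist x y + c * q.tsum :=
  gen_cdist (tinl_injective p q) (tauL_pos p) (ncolor_tinl p q) (relpos_tinl p q)
    (mixL p q) (hcompL p q) (tsum_tensor p q) x y

lemma cdist_tinr (x y : q.Point) :
    ∃ c : ℤ, (c = 0 ∨ c = 1) ∧
      (p.tensor q).cdist (tinr p q x) (tinr p q y) = q.cdist x y + c * p.tsum :=
  gen_cdist (tinr_injective p q) (tauR_pos q) (ncolor_tinr p q) (relpos_tinr p q)
    (mixR p q) (hcompR p q) (by rw [tsum_tensor p q]; ring) x y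

end Instantiate

end TCP
open Pointwise

/-- behavior of the analyzer under tensor products. -/
theorem stmt6 (p q : TCP) :
    TCP.Fset {p.tensor q} = TCP.Fset {p, q} ∧
    TCP.Vset {p.tensor q} = TCP.Vset {p, q} ∧
    (p.tensor q).tsum = p.tsum + q.tsum ∧
    TCP.Lset {p.tensor q} ⊆
      TCP.Lset {p, q} + {x : ℤ | (Int.gcd p.tsum q.tsum : ℤ) ∣ x} ∧
    TCP.Kset {p.tensor q} ⊆
      TCP.Kset {p, q} + {x : ℤ | (Int.gcd p.tsum q.tsum : ℤ) ∣ x} ∧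
    TCP.Xset {p.tensor q} ⊆
      TCP.Xset {p, q} + {x : ℤ | (Int.gcd p.tsum q.tsum : ℤ) ∣ x} := by
  have hdvdR : ∀ c : ℤ, c * q.tsum ∈ {x : ℤ | (Int.gcd p.tsum q.tsum : ℤ) ∣ x} :=
    fun c => Dvd.dvd.mul_left (Int.gcd_dvd_right _ _) c
  have hdvdL : ∀ c : ℤ, c * p.tsum ∈ {x : ℤ | (Int.gcd p.tsum q.tsum : ℤ) ∣ x} :=
    fun c => Dvd.dvd.mul_left (Int.gcd_dvd_left _ _) c
  refine ⟨?_, ?_, TCP.tsum_tensor p q, ?_, ?_, ?_⟩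
  · -- Fset
    ext n
    constructor
    · rintro ⟨p', hp', B, hB, hcard⟩
      rw [Set.mem_singleton_iff] at hp'
      subst hp'
      obtain ⟨z, rfl⟩ := hB
      rcases TCP.tensor_point_cases p q z with ⟨x, rfl⟩ | ⟨y, rfl⟩
      · refine ⟨p, Set.mem_insert _ _, p.blockOf x, ⟨x, rfl⟩, ?_⟩
        rwa [TCP.blockOf_tinl,
          Finset.card_image_of_injective _ (TCP.tinl_injective p q)] at hcard
      · refine ⟨q, Set.mem_insert_of_mem _ rfl, q.blockOf y, ⟨y, rfl⟩, ?_⟩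
        rwa [TCP.blockOf_tinr,
          Finset.card_image_of_injective _ (TCP.tinr_injective p q)] at hcard
    · rintro ⟨p', hp', B, ⟨x, rfl⟩, hcard⟩
      rw [Set.mem_insert_iff, Set.mem_singleton_iff] at hp'
      rcases hp' with rfl | rfl
      · refine ⟨p'.tensor q, Set.mem_singleton _, (p'.blockOf x).image (TCP.tinl p' q),
          ⟨TCP.tinl p' q x, (TCP.blockOf_tinl p' q x).symm⟩, ?_⟩
        rwa [Finset.card_image_of_injective _ (TCP.tinl_injective p' q)]
      · refine ⟨p.tensor p', Set.mem_singleton _, (p'.blockOf x).image (TCP.tinr p p'),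
          ⟨TCP.tinr p p' x, (TCP.blockOf_tinr p p' x).symm⟩, ?_⟩
        rwa [Finset.card_image_of_injective _ (TCP.tinr_injective p p')]
  · -- Vset
    ext v
    constructor
    · rintro ⟨p', hp', B, hB, hv⟩
      rw [Set.mem_singleton_iff] at hp'
      subst hp'
      obtain ⟨z, rfl⟩ := hB
      rcases TCP.tensor_point_cases p q z with ⟨x, rfl⟩ | ⟨y, rfl⟩
      · refine ⟨p, Set.mem_insert _ _, p.blockOf x, ⟨x, rfl⟩, ?_⟩
        rwa [TCP.blockOf_tinl, TCP.csum_image_tinl] at hv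
      · refine ⟨q, Set.mem_insert_of_mem _ rfl, q.blockOf y, ⟨y, rfl⟩, ?_⟩
        rwa [TCP.blockOf_tinr, TCP.csum_image_tinr] at hv
    · rintro ⟨p', hp', B, ⟨x, rfl⟩, hv⟩
      rw [Set.mem_insert_iff, Set.mem_singleton_iff] at hp'
      rcases hp' with rfl | rfl
      · refine ⟨p'.tensor q, Set.mem_singleton _, (p'.blockOf x).image (TCP.tinl p' q),
          ⟨TCP.tinl p' q x, (TCP.blockOf_tinl p' q x).symm⟩, ?_⟩
        rwa [TCP.csum_image_tinl]
      · refine ⟨p.tensor p', Set.mem_singleton _, (p'.blockOf x).image (TCP.tinr p p'),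
          ⟨TCP.tinr p p' x, (TCP.blockOf_tinr p p' x).symm⟩, ?_⟩
        rwa [TCP.csum_image_tinr]
  · -- Lset
    rintro d ⟨p', hp', B, hB, a, ha, b, hb, hab, hIoo, hcol, hcd⟩
    rw [Set.mem_singleton_iff] at hp'
    subst hp'
    obtain ⟨z, rfl⟩ := hB
    rcases TCP.tensor_point_cases p q z with ⟨x, rfl⟩ | ⟨x, rfl⟩
    · rw [TCP.blockOf_tinl] at ha hb hIoo
      obtain ⟨a₀, ha₀, rfl⟩ := Finset.mem_image.mp ha
      obtain ⟨b₀, hb₀, rfl⟩ := Finset.mem_image.mp hb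
      have hab₀ : a₀ ≠ b₀ := fun h => hab (by rw [h])
      have hcol₀ : p.ncolor a₀ = p.ncolor b₀ := by
        rwa [TCP.ncolor_tinl, TCP.ncolor_tinl] at hcol
      have hIoo₀ : p.Ioo a₀ b₀ ∩ p.blockOf x = ∅ := by
        rw [Finset.eq_empty_iff_forall_notMem]
        intro w hw
        rw [Finset.mem_inter] at hw
        have h1 : TCP.tinl p q w ∈ (p.tensor q).Ioo (TCP.tinl p q a₀) (TCP.tinl p q b₀) :=
          (TCP.gen_mem_Ioo (TCP.tauL_pos p) (TCP.relpos_tinl p q) a₀ b₀ w).mpr hw.1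
        have h2 : TCP.tinl p q w ∈ (p.blockOf x).image (TCP.tinl p q) :=
          Finset.mem_image_of_mem _ hw.2
        have h3 := Finset.mem_inter.mpr ⟨h1, h2⟩
        rw [hIoo] at h3
        exact Finset.notMem_empty _ h3
      obtain ⟨c, _, hcf⟩ := TCP.cdist_tinl p q a₀ b₀
      rw [← hcd, hcf]
      exact Set.add_mem_add
        ⟨p, Set.mem_insert _ _, p.blockOf x, ⟨x, rfl⟩, a₀, ha₀, b₀, hb₀, hab₀, hIoo₀, hcol₀, rfl⟩
        (hdvdR c)
    · rw [TCP.blockOf_tinr] at ha hb hIoo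
      obtain ⟨a₀, ha₀, rfl⟩ := Finset.mem_image.mp ha
      obtain ⟨b₀, hb₀, rfl⟩ := Finset.mem_image.mp hb
      have hab₀ : a₀ ≠ b₀ := fun h => hab (by rw [h])
      have hcol₀ : q.ncolor a₀ = q.ncolor b₀ := by
        rwa [TCP.ncolor_tinr, TCP.ncolor_tinr] at hcol
      have hIoo₀ : q.Ioo a₀ b₀ ∩ q.blockOf x = ∅ := by
        rw [Finset.eq_empty_iff_forall_notMem]
        intro w hw
        rw [Finset.mem_inter] at hw
        have h1 : TCP.tinr p q w ∈ (p.tensor q).Ioo (TCP.tinr p q a₀) (TCP.tinr p q b₀) :=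
          (TCP.gen_mem_Ioo (TCP.tauR_pos q) (TCP.relpos_tinr p q) a₀ b₀ w).mpr hw.1
        have h2 : TCP.tinr p q w ∈ (q.blockOf x).image (TCP.tinr p q) :=
          Finset.mem_image_of_mem _ hw.2
        have h3 := Finset.mem_inter.mpr ⟨h1, h2⟩
        rw [hIoo] at h3
        exact Finset.notMem_empty _ h3
      obtain ⟨c, _, hcf⟩ := TCP.cdist_tinr p q a₀ b₀
      rw [← hcd, hcf]
      exact Set.add_mem_add
        ⟨q, Set.mem_insert_of_mem _ rfl, q.blockOf x, ⟨x, rfl⟩, a₀, ha₀, b₀, hb₀, hab₀, hIoo₀,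
          hcol₀, rfl⟩
        (hdvdL c)
  · -- Kset
    rintro d ⟨p', hp', B, hB, a, ha, b, hb, hab, hIoo, hcol, hcd⟩
    rw [Set.mem_singleton_iff] at hp'
    subst hp'
    obtain ⟨z, rfl⟩ := hB
    rcases TCP.tensor_point_cases p q z with ⟨x, rfl⟩ | ⟨x, rfl⟩
    · rw [TCP.blockOf_tinl] at ha hb hIoo
      obtain ⟨a₀, ha₀, rfl⟩ := Finset.mem_image.mp ha
      obtain ⟨b₀, hb₀, rfl⟩ := Finset.mem_image.mp hb
      have hab₀ : a₀ ≠ b₀ := fun h => hab (by rw [h])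
      have hcol₀ : p.ncolor a₀ ≠ p.ncolor b₀ := by
        rwa [TCP.ncolor_tinl, TCP.ncolor_tinl] at hcol
      have hIoo₀ : p.Ioo a₀ b₀ ∩ p.blockOf x = ∅ := by
        rw [Finset.eq_empty_iff_forall_notMem]
        intro w hw
        rw [Finset.mem_inter] at hw
        have h1 : TCP.tinl p q w ∈ (p.tensor q).Ioo (TCP.tinl p q a₀) (TCP.tinl p q b₀) :=
          (TCP.gen_mem_Ioo (TCP.tauL_pos p) (TCP.relpos_tinl p q) a₀ b₀ w).mpr hw.1
        have h2 : TCP.tinl p q w ∈ (p.blockOf x).image (TCP.tinl p q) :=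
          Finset.mem_image_of_mem _ hw.2
        have h3 := Finset.mem_inter.mpr ⟨h1, h2⟩
        rw [hIoo] at h3
        exact Finset.notMem_empty _ h3
      obtain ⟨c, _, hcf⟩ := TCP.cdist_tinl p q a₀ b₀
      rw [← hcd, hcf]
      exact Set.add_mem_add
        ⟨p, Set.mem_insert _ _, p.blockOf x, ⟨x, rfl⟩, a₀, ha₀, b₀, hb₀, hab₀, hIoo₀, hcol₀, rfl⟩
        (hdvdR c)
    · rw [TCP.blockOf_tinr] at ha hb hIoo
      obtain ⟨a₀, ha₀, rfl⟩ := Finset.mem_image.mp ha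
      obtain ⟨b₀, hb₀, rfl⟩ := Finset.mem_image.mp hb
      have hab₀ : a₀ ≠ b₀ := fun h => hab (by rw [h])
      have hcol₀ : q.ncolor a₀ ≠ q.ncolor b₀ := by
        rwa [TCP.ncolor_tinr, TCP.ncolor_tinr] at hcol
      have hIoo₀ : q.Ioo a₀ b₀ ∩ q.blockOf x = ∅ := by
        rw [Finset.eq_empty_iff_forall_notMem]
        intro w hw
        rw [Finset.mem_inter] at hw
        have h1 : TCP.tinr p q w ∈ (p.tensor q).Ioo (TCP.tinr p q a₀) (TCP.tinr p q b₀) :=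
          (TCP.gen_mem_Ioo (TCP.tauR_pos q) (TCP.relpos_tinr p q) a₀ b₀ w).mpr hw.1
        have h2 : TCP.tinr p q w ∈ (q.blockOf x).image (TCP.tinr p q) :=
          Finset.mem_image_of_mem _ hw.2
        have h3 := Finset.mem_inter.mpr ⟨h1, h2⟩
        rw [hIoo] at h3
        exact Finset.notMem_empty _ h3
      obtain ⟨c, _, hcf⟩ := TCP.cdist_tinr p q a₀ b₀
      rw [← hcd, hcf]
      exact Set.add_mem_add
        ⟨q, Set.mem_insert_of_mem _ rfl, q.blockOf x, ⟨x, rfl⟩, a₀, ha₀, b₀, hb₀, hab₀, hIoo₀,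
          hcol₀, rfl⟩
        (hdvdL c)
  · -- Xset
    rintro d ⟨p', hp', B₁, B₂, hB₁, hB₂, hne, hcross, a, ha, b, hb, hcd⟩
    rw [Set.mem_singleton_iff] at hp'
    subst hp'
    obtain ⟨z₁, rfl⟩ := hB₁
    obtain ⟨z₂, rfl⟩ := hB₂
    rcases TCP.tensor_point_cases p q z₁ with ⟨x₁, rfl⟩ | ⟨y₁, rfl⟩ <;>
      rcases TCP.tensor_point_cases p q z₂ with ⟨x₂, rfl⟩ | ⟨y₂, rfl⟩
    · -- both from p
      rw [TCP.blockOf_tinl] at ha hb hne hcross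
      rw [TCP.blockOf_tinl p q x₂] at hne hcross
      obtain ⟨a₀, ha₀, rfl⟩ := Finset.mem_image.mp ha
      obtain ⟨b₀, hb₀, rfl⟩ := Finset.mem_image.mp hb
      have hne₀ : p.blockOf x₁ ≠ p.blockOf x₂ := fun h => hne (by rw [h])
      have hcross₀ : p.Cross (p.blockOf x₁) (p.blockOf x₂) := by
        obtain ⟨u, hu, v, hv, u', hu', v', hv', hord⟩ := hcross
        obtain ⟨u₀, hu₀, rfl⟩ := Finset.mem_image.mp hu
        obtain ⟨v₀, hv₀, rfl⟩ := Finset.mem_image.mp hv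
        obtain ⟨u₀', hu₀', rfl⟩ := Finset.mem_image.mp hu'
        obtain ⟨v₀', hv₀', rfl⟩ := Finset.mem_image.mp hv'
        exact ⟨u₀, hu₀, v₀, hv₀, u₀', hu₀', v₀', hv₀',
          (TCP.gen_ordered4_iff (TCP.tauL_pos p) (TCP.relpos_tinl p q) _ _ _ _).mp hord⟩
      obtain ⟨c, _, hcf⟩ := TCP.cdist_tinl p q a₀ b₀
      rw [← hcd, hcf]
      exact Set.add_mem_add
        ⟨p, Set.mem_insert _ _, p.blockOf x₁, p.blockOf x₂, ⟨x₁, rfl⟩, ⟨x₂, rfl⟩, hne₀,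
          hcross₀, a₀, ha₀, b₀, hb₀, rfl⟩
        (hdvdR c)
    · -- mixed p/q : impossible (no crossing)
      exfalso
      rw [TCP.blockOf_tinl, TCP.blockOf_tinr] at hcross
      obtain ⟨u, hu, v, hv, u', hu', v', hv', hord⟩ := hcross
      obtain ⟨u₀, hu₀, rfl⟩ := Finset.mem_image.mp hu
      obtain ⟨v₀, hv₀, rfl⟩ := Finset.mem_image.mp hv
      obtain ⟨u₀', hu₀', rfl⟩ := Finset.mem_image.mp hu'
      obtain ⟨v₀', hv₀', rfl⟩ := Finset.mem_image.mp hv'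
      exact TCP.gen_no_mixed (TCP.relpos_tinl p q) (TCP.mixL p q) u₀ v₀ _ _
        (fun w => TCP.tinl_ne_tinr p q w u₀') (fun w => TCP.tinl_ne_tinr p q w v₀') hord
    · -- mixed q/p : impossible (no crossing)
      exfalso
      rw [TCP.blockOf_tinr, TCP.blockOf_tinl] at hcross
      obtain ⟨u, hu, v, hv, u', hu', v', hv', hord⟩ := hcross
      obtain ⟨u₀, hu₀, rfl⟩ := Finset.mem_image.mp hu
      obtain ⟨v₀, hv₀, rfl⟩ := Finset.mem_image.mp hv
      obtain ⟨u₀', hu₀', rfl⟩ := Finset.mem_image.mp hu'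
      obtain ⟨v₀', hv₀', rfl⟩ := Finset.mem_image.mp hv'
      exact TCP.gen_no_mixed (TCP.relpos_tinr p q) (TCP.mixR p q) u₀ v₀ _ _
        (fun w => (TCP.tinl_ne_tinr p q u₀' w).symm)
        (fun w => (TCP.tinl_ne_tinr p q v₀' w).symm) hord
    · -- both from q
      rw [TCP.blockOf_tinr] at ha hb hne hcross
      rw [TCP.blockOf_tinr p q y₂] at hne hcross
      obtain ⟨a₀, ha₀, rfl⟩ := Finset.mem_image.mp ha
      obtain ⟨b₀, hb₀, rfl⟩ := Finset.mem_image.mp hb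
      have hne₀ : q.blockOf y₁ ≠ q.blockOf y₂ := fun h => hne (by rw [h])
      have hcross₀ : q.Cross (q.blockOf y₁) (q.blockOf y₂) := by
        obtain ⟨u, hu, v, hv, u', hu', v', hv', hord⟩ := hcross
        obtain ⟨u₀, hu₀, rfl⟩ := Finset.mem_image.mp hu
        obtain ⟨v₀, hv₀, rfl⟩ := Finset.mem_image.mp hv
        obtain ⟨u₀', hu₀', rfl⟩ := Finset.mem_image.mp hu'
        obtain ⟨v₀', hv₀', rfl⟩ := Finset.mem_image.mp hv'
        exact ⟨u₀, hu₀, v₀, hv₀, u₀', hu₀', v₀', hv₀',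
          (TCP.gen_ordered4_iff (TCP.tauR_pos q) (TCP.relpos_tinr p q) _ _ _ _).mp hord⟩
      obtain ⟨c, _, hcf⟩ := TCP.cdist_tinr p q a₀ b₀
      rw [← hcd, hcf]
      exact Set.add_mem_add
        ⟨q, Set.mem_insert_of_mem _ rfl, q.blockOf y₁, q.blockOf y₂, ⟨y₁, rfl⟩, ⟨y₂, rfl⟩, hne₀,
          hcross₀, a₀, ha₀, b₀, hb₀, rfl⟩
        (hdvdL c)
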